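/- Let b and c be nonnegative integers and let (n′_1, …, n′_j) be a sequence of nonnegative integers. Assume it is not the case that n′_1 + … + n′_j = b + 3c and (n′_1, …, n′_j) fails to be (b,c)-reachable. Then: if n′_1 + … + n′_j ≤ b + 3c, there exists a (b,c)-reachable sequence (n_1, …, n_j) with n_k ≥ n′_k for every k; and if n′_1 + … + n′_j ≥ b + 3c, there exists a (b,c)-reachable sequence (n_1, …, n_j) with n_k ≤ n′_k for every k. -/
import Mathlib


/-- Add `d` dots to column `i`. -/
def addDots {j : ℕ} (i : Fin j) (d : ℕ) (f : Fin j → ℕ) : Fin j → ℕ :=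
  Function.update f i (f i + d)

/-- `DotReachable b c n` means that the dot configuration `n` on `j` columns can be
produced by a play of the game consisting of exactly `b` moves of type (1) and exactly
`c` further moves, each of type (2), (3), or (4):
(1) add one dot to any one column; (2) add one dot to each of three distinct columns;
(3) choose columns `i < i'` and add one dot to column `i` and two dots to column `i'`;
(4) add three dots to a single column. -/
inductive DotReachable {j : ℕ} : ℕ → ℕ → (Fin j → ℕ) → Prop
  | init : DotReachable 0 0 (fun _ => 0)
  | move1 {b c : ℕ} {f : Fin j → ℕ} (i : Fin j) :
      DotReachable b c f → DotReachable (b + 1) c (addDots i 1 f)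
  | move2 {b c : ℕ} {f : Fin j → ℕ} (i₁ i₂ i₃ : Fin j)
      (h₁₂ : i₁ ≠ i₂) (h₁₃ : i₁ ≠ i₃) (h₂₃ : i₂ ≠ i₃) :
      DotReachable b c f →
        DotReachable b (c + 1) (addDots i₁ 1 (addDots i₂ 1 (addDots i₃ 1 f)))
  | move3 {b c : ℕ} {f : Fin j → ℕ} (i i' : Fin j) (h : i < i') :
      DotReachable b c f → DotReachable b (c + 1) (addDots i 1 (addDots i' 2 f))
  | move4 {b c : ℕ} {f : Fin j → ℕ} (i : Fin j) :
      DotReachable b c f → DotReachable b (c + 1) (addDots i 3 f)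

lemma addDots_apply {j : ℕ} (i : Fin j) (d : ℕ) (f : Fin j → ℕ) (x : Fin j) :
    addDots i d f x = if x = i then f i + d else f x := by
  simp [addDots, Function.update_apply]

lemma sum_update_sub {j : ℕ} (f : Fin j → ℕ) (k : Fin j) (d : ℕ) (hd : d ≤ f k) :
    (∑ x, Function.update f k (f k - d) x) + d = ∑ x, f x := by
  rw [Finset.sum_update_of_mem (Finset.mem_univ k),
     ← Finset.add_sum_erase _ f (Finset.mem_univ k), Finset.erase_eq]
  omega

lemma pile_reachable {j : ℕ} (i : Fin j) (b c : ℕ) :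
    DotReachable b c (fun k => if k = i then b + 3 * c else 0) := by
  induction c with
  | zero =>
    induction b with
    | zero =>
      convert DotReachable.init (j := j) using 1
      funext x; split <;> rfl
    | succ b ih =>
      convert DotReachable.move1 i ih using 1
      funext x
      simp only [addDots_apply]
      by_cases hx : x = i <;> simp [hx]
  | succ c ih =>
      convert DotReachable.move4 i ih using 1
      funext x
      simp only [addDots_apply]
      by_cases hx : x = i <;> simp [hx] <;> omega

lemma down_aux {j : ℕ} :
    ∀ (c : ℕ) (n' : Fin j → ℕ), 3 * c < ∑ k, n' k →
      ∃ n, DotReachable 0 c n ∧ ∀ k, n k ≤ n' k := by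
  intro c
  induction c with
  | zero => exact fun n' _ => ⟨_, DotReachable.init, fun k => Nat.zero_le _⟩
  | succ c ih =>
    intro n' hsum
    by_cases h3 : ∃ k, 3 ≤ n' k
    · obtain ⟨k, hk⟩ := h3
      have hs := sum_update_sub n' k 3 hk
      obtain ⟨n, hn, hle⟩ := ih (Function.update n' k (n' k - 3)) (by omega)
      refine ⟨addDots k 3 n, DotReachable.move4 k hn, fun x => ?_⟩
      have hx := hle x
      simp only [addDots_apply, Function.update_apply] at hx ⊢
      rcases eq_or_ne k x with rfl | hxk
      · simp at hx ⊢; omega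
      · simp [Ne.symm hxk] at hx ⊢; omega
    by_cases hm : ∃ i i', i < i' ∧ 1 ≤ n' i ∧ 2 ≤ n' i'
    · obtain ⟨i, i', hlt, h1, h2⟩ := hm
      have hne : i ≠ i' := ne_of_lt hlt
      have hne' : i' ≠ i := (ne_of_lt hlt).symm
      have hs1 := sum_update_sub n' i' 2 h2
      set g := Function.update n' i' (n' i' - 2) with hg
      have hgi : g i = n' i := by rw [hg]; exact Function.update_of_ne hne _ _
      have hs2 := sum_update_sub g i 1 (by rw [hgi]; exact h1)
      obtain ⟨n, hn, hle⟩ := ih (Function.update g i (g i - 1)) (by omega)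
      refine ⟨addDots i 1 (addDots i' 2 n), DotReachable.move3 i i' hlt hn, fun x => ?_⟩
      have hx := hle x
      simp only [addDots_apply, Function.update_apply, hg] at hx ⊢
      rcases eq_or_ne i x with rfl | hxi
      · simp [hne] at hx ⊢; omega
      · rcases eq_or_ne i' x with rfl | hxi'
        · simp [hne'] at hx ⊢; omega
        · simp [Ne.symm hxi, Ne.symm hxi'] at hx ⊢; omega
    by_cases ht : ∃ i₁ i₂ i₃ : Fin j, i₁ ≠ i₂ ∧ i₁ ≠ i₃ ∧ i₂ ≠ i₃ ∧
        1 ≤ n' i₁ ∧ 1 ≤ n' i₂ ∧ 1 ≤ n' i₃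
    · obtain ⟨i₁, i₂, i₃, h12, h13, h23, ha, hb, hc⟩ := ht
      have h21 : i₂ ≠ i₁ := Ne.symm h12
      have h31 : i₃ ≠ i₁ := Ne.symm h13
      have h32 : i₃ ≠ i₂ := Ne.symm h23
      have hs3 := sum_update_sub n' i₃ 1 hc
      set g₃ := Function.update n' i₃ (n' i₃ - 1) with hg3
      have hg3i2 : g₃ i₂ = n' i₂ := by rw [hg3]; exact Function.update_of_ne h23 _ _
      have hs2 := sum_update_sub g₃ i₂ 1 (by rw [hg3i2]; exact hb)
      set g₂ := Function.update g₃ i₂ (g₃ i₂ - 1) with hg2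
      have hg2i1 : g₂ i₁ = n' i₁ := by
        rw [hg2, Function.update_of_ne h12, hg3, Function.update_of_ne h13]
      have hs1 := sum_update_sub g₂ i₁ 1 (by rw [hg2i1]; exact ha)
      obtain ⟨n, hn, hle⟩ := ih (Function.update g₂ i₁ (g₂ i₁ - 1)) (by omega)
      refine ⟨addDots i₁ 1 (addDots i₂ 1 (addDots i₃ 1 n)),
        DotReachable.move2 i₁ i₂ i₃ h12 h13 h23 hn, fun x => ?_⟩
      have hx := hle x
      simp only [addDots_apply, Function.update_apply, hg2, hg3] at hx ⊢
      rcases eq_or_ne i₁ x with rfl | hx1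
      · simp [h12, h13] at hx ⊢; omega
      · rcases eq_or_ne i₂ x with rfl | hx2
        · simp [h21, h23] at hx ⊢; omega
        · rcases eq_or_ne i₃ x with rfl | hx3
          · simp [h31, h32] at hx ⊢; omega
          · simp [Ne.symm hx1, Ne.symm hx2, Ne.symm hx3] at hx ⊢; omega
    · exfalso
      push_neg at h3 hm ht
      classical
      set T := Finset.univ.filter (fun k => 1 ≤ n' k) with hT
      have hTsum : ∑ x ∈ T, n' x = ∑ x, n' x :=
        Finset.sum_filter_of_ne (fun x _ hx => by omega)
      have hcard : T.card ≤ 2 := by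
        by_contra hcc
        push_neg at hcc
        obtain ⟨a, b', c', ha, hb, hc', hab, hac, hbc⟩ := Finset.two_lt_card_iff.mp hcc
        simp only [hT, Finset.mem_filter] at ha hb hc'
        exact absurd (ht a b' c' hab hac hbc ha.2 hb.2) (by omega)
      obtain h0 | h1 | h2 : T.card = 0 ∨ T.card = 1 ∨ T.card = 2 := by omega
      · rw [Finset.card_eq_zero.mp h0] at hTsum
        simp at hTsum
        omega
      · obtain ⟨a, haT⟩ := Finset.card_eq_one.mp h1
        rw [haT] at hTsum
        simp only [Finset.sum_singleton] at hTsum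
        have := h3 a
        omega
      · obtain ⟨a, b', hab, habT⟩ := Finset.card_eq_two.mp h2
        have haT : a ∈ T := by rw [habT]; simp
        have hbT : b' ∈ T := by rw [habT]; simp
        simp only [hT, Finset.mem_filter] at haT hbT
        rw [habT, Finset.sum_pair hab] at hTsum
        rcases lt_or_gt_of_ne hab with hlt | hgt
        · have := hm a b' hlt haT.2
          have := h3 a
          omega
        · have := hm b' a hgt hbT.2
          have := h3 b'
          omega

lemma down_lemma {j : ℕ} :
    ∀ (b c : ℕ) (n' : Fin j → ℕ), b + 3 * c < ∑ k, n' k →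
      ∃ n, DotReachable b c n ∧ ∀ k, n k ≤ n' k := by
  intro b
  induction b with
  | zero => intro c n' h; exact down_aux c n' (by omega)
  | succ b ih =>
    intro c n' hsum
    have hex : ∃ k, 1 ≤ n' k := by
      by_contra hz
      push_neg at hz
      have : ∑ k, n' k = 0 := Finset.sum_eq_zero (fun x _ => by have := hz x; omega)
      omega
    obtain ⟨k, hk⟩ := hex
    have hs := sum_update_sub n' k 1 hk
    obtain ⟨n, hn, hle⟩ := ih c (Function.update n' k (n' k - 1)) (by omega)
    refine ⟨addDots k 1 n, DotReachable.move1 k hn, fun x => ?_⟩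
    have hx := hle x
    simp only [addDots_apply, Function.update_apply] at hx ⊢
    rcases eq_or_ne k x with rfl | hxk
    · simp at hx ⊢; omega
    · simp [Ne.symm hxk] at hx ⊢; omega


lemma up_aux {j : ℕ} (hj : 0 < j) :
    ∀ (c : ℕ) (n' : Fin j → ℕ), (∑ k, n' k) < 3 * c →
      ∃ n, DotReachable 0 c n ∧ ∀ k, n' k ≤ n k := by
  intro c
  induction c with
  | zero => intro n' h; exact absurd h (by omega)
  | succ c ih =>
    intro n' hsum
    by_cases h3 : ∃ k, 3 ≤ n' k
    · obtain ⟨k, hk⟩ := h3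
      have hs := sum_update_sub n' k 3 hk
      obtain ⟨n, hn, hle⟩ := ih (Function.update n' k (n' k - 3)) (by omega)
      refine ⟨addDots k 3 n, DotReachable.move4 k hn, fun x => ?_⟩
      have hx := hle x
      simp only [addDots_apply, Function.update_apply] at hx ⊢
      rcases eq_or_ne k x with rfl | hxk
      · simp at hx ⊢; omega
      · simp [Ne.symm hxk] at hx ⊢; omega
    by_cases hm : ∃ i i', i < i' ∧ 1 ≤ n' i ∧ 2 ≤ n' i'
    · obtain ⟨i, i', hlt, h1, h2⟩ := hm
      have hne : i ≠ i' := ne_of_lt hlt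
      have hne' : i' ≠ i := (ne_of_lt hlt).symm
      have hs1 := sum_update_sub n' i' 2 h2
      set g := Function.update n' i' (n' i' - 2) with hg
      have hgi : g i = n' i := by rw [hg]; exact Function.update_of_ne hne _ _
      have hs2 := sum_update_sub g i 1 (by rw [hgi]; exact h1)
      obtain ⟨n, hn, hle⟩ := ih (Function.update g i (g i - 1)) (by omega)
      refine ⟨addDots i 1 (addDots i' 2 n), DotReachable.move3 i i' hlt hn, fun x => ?_⟩
      have hx := hle x
      simp only [addDots_apply, Function.update_apply, hg] at hx ⊢
      rcases eq_or_ne i x with rfl | hxi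
      · simp [hne] at hx ⊢; omega
      · rcases eq_or_ne i' x with rfl | hxi'
        · simp [hne'] at hx ⊢; omega
        · simp [Ne.symm hxi, Ne.symm hxi'] at hx ⊢; omega
    by_cases ht : ∃ i₁ i₂ i₃ : Fin j, i₁ ≠ i₂ ∧ i₁ ≠ i₃ ∧ i₂ ≠ i₃ ∧
        1 ≤ n' i₁ ∧ 1 ≤ n' i₂ ∧ 1 ≤ n' i₃
    · obtain ⟨i₁, i₂, i₃, h12, h13, h23, ha, hb, hc⟩ := ht
      have h21 : i₂ ≠ i₁ := Ne.symm h12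
      have h31 : i₃ ≠ i₁ := Ne.symm h13
      have h32 : i₃ ≠ i₂ := Ne.symm h23
      have hs3 := sum_update_sub n' i₃ 1 hc
      set g₃ := Function.update n' i₃ (n' i₃ - 1) with hg3
      have hg3i2 : g₃ i₂ = n' i₂ := by rw [hg3]; exact Function.update_of_ne h23 _ _
      have hs2 := sum_update_sub g₃ i₂ 1 (by rw [hg3i2]; exact hb)
      set g₂ := Function.update g₃ i₂ (g₃ i₂ - 1) with hg2
      have hg2i1 : g₂ i₁ = n' i₁ := by
        rw [hg2, Function.update_of_ne h12, hg3, Function.update_of_ne h13]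
      have hs1 := sum_update_sub g₂ i₁ 1 (by rw [hg2i1]; exact ha)
      obtain ⟨n, hn, hle⟩ := ih (Function.update g₂ i₁ (g₂ i₁ - 1)) (by omega)
      refine ⟨addDots i₁ 1 (addDots i₂ 1 (addDots i₃ 1 n)),
        DotReachable.move2 i₁ i₂ i₃ h12 h13 h23 hn, fun x => ?_⟩
      have hx := hle x
      simp only [addDots_apply, Function.update_apply, hg2, hg3] at hx ⊢
      rcases eq_or_ne i₁ x with rfl | hx1
      · simp [h12, h13] at hx ⊢; omega
      · rcases eq_or_ne i₂ x with rfl | hx2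
        · simp [h21, h23] at hx ⊢; omega
        · rcases eq_or_ne i₃ x with rfl | hx3
          · simp [h31, h32] at hx ⊢; omega
          · simp [Ne.symm hx1, Ne.symm hx2, Ne.symm hx3] at hx ⊢; omega
    · push_neg at h3 hm ht
      classical
      set T := Finset.univ.filter (fun k => 1 ≤ n' k) with hT
      have hTz : ∀ x, x ∉ T → n' x = 0 := by
        intro x hx
        simp only [hT, Finset.mem_filter, Finset.mem_univ, true_and] at hx
        omega
      have hTsum : ∑ x ∈ T, n' x = ∑ x, n' x :=
        Finset.sum_filter_of_ne (fun x _ hx => by omega)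
      have hcard : T.card ≤ 2 := by
        by_contra hcc
        push_neg at hcc
        obtain ⟨a, b', c', haa, hb, hc', hab, hac, hbc⟩ := Finset.two_lt_card_iff.mp hcc
        simp only [hT, Finset.mem_filter] at haa hb hc'
        exact absurd (ht a b' c' hab hac hbc haa.2 hb.2) (by omega)
      have key : ∀ i i' : Fin j, i < i' → 1 ≤ n' i → 1 ≤ n' i' →
          n' i + n' i' = ∑ x, n' x → (∀ x, x ≠ i → x ≠ i' → n' x = 0) →
          ∃ n, DotReachable 0 (c + 1) n ∧ ∀ k, n' k ≤ n k := by
        intro i i' hlt h1 h1' hsum2 hz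
        have hne : i ≠ i' := ne_of_lt hlt
        have h2' := hm i i' hlt h1
        refine ⟨addDots i 1 (addDots i' 2 (fun k => if k = i then 0 + 3 * c else 0)),
          DotReachable.move3 i i' hlt (pile_reachable i 0 c), fun x => ?_⟩
        simp only [addDots_apply]
        rcases eq_or_ne i x with rfl | hxi
        · simp [hne]; omega
        · rcases eq_or_ne i' x with rfl | hxi'
          · simp [Ne.symm hne]; omega
          · have hz0 := hz x (Ne.symm hxi) (Ne.symm hxi')
            simp [Ne.symm hxi, Ne.symm hxi', hz0]
      obtain h0 | h1c | h2c : T.card = 0 ∨ T.card = 1 ∨ T.card = 2 := by omega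
      · refine ⟨_, pile_reachable ⟨0, hj⟩ 0 (c + 1), fun x => ?_⟩
        have hx0 : n' x = 0 := hTz x (by rw [Finset.card_eq_zero.mp h0]; simp)
        rw [hx0]
        exact Nat.zero_le _
      · obtain ⟨a, haT⟩ := Finset.card_eq_one.mp h1c
        refine ⟨_, pile_reachable a 0 (c + 1), fun x => ?_⟩
        have hax : n' a ≤ ∑ x, n' x :=
          Finset.single_le_sum (fun i _ => Nat.zero_le (n' i)) (Finset.mem_univ a)
        rcases eq_or_ne a x with rfl | hxa
        · simp; omega
        · have hx0 : n' x = 0 := hTz x (by rw [haT]; simp [Ne.symm hxa])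
          simp [Ne.symm hxa, hx0]
      · obtain ⟨a, b', hab, habT⟩ := Finset.card_eq_two.mp h2c
        have haT : a ∈ T := by rw [habT]; simp
        have hbT : b' ∈ T := by rw [habT]; simp
        simp only [hT, Finset.mem_filter] at haT hbT
        have hsum2 : n' a + n' b' = ∑ x, n' x := by
          rw [← hTsum, habT, Finset.sum_pair hab]
        have hz : ∀ x, x ≠ a → x ≠ b' → n' x = 0 := fun x hxa hxb =>
          hTz x (by rw [habT]; simp [hxa, hxb])
        rcases lt_or_gt_of_ne hab with hlt | hgt
        · exact key a b' hlt haT.2 hbT.2 hsum2 hz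
        · exact key b' a hgt hbT.2 haT.2 (by omega) (fun x hx1 hx2 => hz x hx2 hx1)

lemma up_lemma {j : ℕ} (hj : 0 < j) :
    ∀ (b c : ℕ) (n' : Fin j → ℕ), (∑ k, n' k) < b + 3 * c →
      ∃ n, DotReachable b c n ∧ ∀ k, n' k ≤ n k := by
  intro b
  induction b with
  | zero => intro c n' h; exact up_aux hj c n' (by omega)
  | succ b ih =>
    intro c n' hsum
    by_cases hex : ∃ k, 1 ≤ n' k
    · obtain ⟨k, hk⟩ := hex
      have hs := sum_update_sub n' k 1 hk
      obtain ⟨n, hn, hle⟩ := ih c (Function.update n' k (n' k - 1)) (by omega)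
      refine ⟨addDots k 1 n, DotReachable.move1 k hn, fun x => ?_⟩
      have hx := hle x
      simp only [addDots_apply, Function.update_apply] at hx ⊢
      rcases eq_or_ne k x with rfl | hxk
      · simp at hx ⊢; omega
      · simp [Ne.symm hxk] at hx ⊢; omega
    · push_neg at hex
      refine ⟨_, pile_reachable ⟨0, hj⟩ (b + 1) c, fun x => ?_⟩
      have hx0 : n' x = 0 := by have := hex x; omega
      rw [hx0]
      exact Nat.zero_le _

/-- Assume it is not the case that `n'` sums to `b + 3c` and fails to be
`(b, c)`-reachable. Then: if the sum of `n'` is at most `b + 3c`, there is a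
`(b, c)`-reachable sequence dominating `n'` termwise, and if the sum of `n'` is at
least `b + 3c`, there is a `(b, c)`-reachable sequence dominated by `n'` termwise. -/
theorem dot_reachable_up_down {j : ℕ} (hj : 0 < j) (b c : ℕ) (n' : Fin j → ℕ)
    (h : ¬((∑ k, n' k) = b + 3 * c ∧ ¬ DotReachable b c n')) :
    ((∑ k, n' k) ≤ b + 3 * c →
      ∃ n : Fin j → ℕ, DotReachable b c n ∧ ∀ k, n' k ≤ n k) ∧
    (b + 3 * c ≤ (∑ k, n' k) →
      ∃ n : Fin j → ℕ, DotReachable b c n ∧ ∀ k, n k ≤ n' k) := by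
  constructor
  · intro hle
    rcases eq_or_lt_of_le hle with heq | hlt
    · have hr : DotReachable b c n' := by
        by_contra hnr
        exact h ⟨heq, hnr⟩
      exact ⟨n', hr, fun k => le_refl _⟩
    · exact up_lemma hj b c n' hlt
  · intro hge
    rcases eq_or_lt_of_le hge with heq | hlt
    · have hr : DotReachable b c n' := by
        by_contra hnr
        exact h ⟨heq.symm, hnr⟩
      exact ⟨n', hr, fun k => le_refl _⟩
    · exact down_lemma b c n' hlt
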